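/- Let E be a positive-definite 2-plane in ℝ^{2,n+1} and π_E the orthogonal projection onto E. Then for every photon (isotropic 2-plane) F of ℝ^{2,n+1}, the restriction π_E|_F : F → E is a linear isomorphism; consequently F is the graph of a unique linear map t_F : E → E^⊥ which is an isometric embedding of (E, ⟨·,·⟩|_E) into (E^⊥, −⟨·,·⟩|_{E^⊥}). -/

import Mathlib

/-- The signature `(2, n+1)` bilinear form on `ℝ^{n+3}`. -/
noncomputable def bform (n : ℕ) (x y : Fin (n + 3) → ℝ) : ℝ :=
  ∑ i : Fin (n + 3), (if (i : ℕ) < 2 then (1 : ℝ) else -1) * (x i * y i)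


lemma bform_comm (n : ℕ) (x y : Fin (n+3) → ℝ) : bform n x y = bform n y x := by
  simp [bform, mul_comm]

noncomputable def Bf (n : ℕ) : (Fin (n+3) → ℝ) →ₗ[ℝ] (Fin (n+3) → ℝ) →ₗ[ℝ] ℝ :=
  LinearMap.mk₂ ℝ (bform n)
    (by intro a b c; simp [bform, add_mul, mul_add, Finset.sum_add_distrib])
    (by intro t a b
        simp only [bform, Finset.mul_sum, Pi.smul_apply, smul_eq_mul]
        exact Finset.sum_congr rfl fun i _ => by ring)
    (by intro a b c; simp [bform, add_mul, mul_add, Finset.sum_add_distrib])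
    (by intro t a b
        simp only [bform, Finset.mul_sum, Pi.smul_apply, smul_eq_mul]
        exact Finset.sum_congr rfl fun i _ => by ring)

@[simp] lemma Bf_apply (n : ℕ) (x y : Fin (n+3) → ℝ) : Bf n x y = bform n x y := rfl

lemma fin_lt_two (n : ℕ) (i : Fin (n+3)) (h : (i:ℕ) < 2) : i = 0 ∨ i = 1 := by
  have h' : (i:ℕ) = 0 ∨ (i:ℕ) = 1 := by omega
  rcases h' with h' | h'
  · exact Or.inl (Fin.ext (by simp [h']))
  · exact Or.inr (Fin.ext (by simp [h']))

lemma bform_term_nonpos (n : ℕ) (v : Fin (n+3) → ℝ) (h0 : v 0 = 0) (h1 : v 1 = 0) :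
    ∀ i : Fin (n+3), (if (i:ℕ) < 2 then (1:ℝ) else -1) * (v i * v i) ≤ 0 := by
  intro i
  rcases lt_or_ge (i : ℕ) 2 with h | h
  · rcases fin_lt_two n i h with rfl | rfl <;> simp [h0, h1]
  · have hn : ¬ ((i:ℕ) < 2) := Nat.not_lt.mpr h
    simp only [hn, if_false]
    nlinarith [sq_nonneg (v i)]

lemma bform_nonpos (n : ℕ) (v : Fin (n+3) → ℝ) (h0 : v 0 = 0) (h1 : v 1 = 0) :
    bform n v v ≤ 0 :=
  Finset.sum_nonpos fun i _ => bform_term_nonpos n v h0 h1 i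

lemma bform_zero_coords (n : ℕ) (v : Fin (n+3) → ℝ) (h0 : v 0 = 0) (h1 : v 1 = 0)
    (hb : bform n v v = 0) : v = 0 := by
  have key : ∀ i : Fin (n+3), (if (i:ℕ) < 2 then (1:ℝ) else -1) * (v i * v i) = 0 := by
    have := (Finset.sum_eq_zero_iff_of_nonpos
      (fun i _ => bform_term_nonpos n v h0 h1 i)).mp hb
    intro i; exact this i (Finset.mem_univ i)
  funext i
  have hk := key i
  show v i = 0
  rcases lt_or_ge (i : ℕ) 2 with h | h
  · rcases fin_lt_two n i h with rfl | rfl <;> assumption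
  · have hn : ¬ ((i:ℕ) < 2) := Nat.not_lt.mpr h
    simp only [hn, if_false] at hk
    nlinarith

/-- An isotropic vector orthogonal to a positive-definite 2-plane is zero. -/
lemma isotropic_perp_zero (n : ℕ) (E : Submodule ℝ (Fin (n + 3) → ℝ))
    (hE2 : Module.finrank ℝ E = 2)
    (hEpos : ∀ u ∈ E, u ≠ 0 → 0 < bform n u u)
    (v : Fin (n+3) → ℝ) (hperp : ∀ e ∈ E, bform n v e = 0)
    (hv : bform n v v = 0) : v = 0 := by
  by_contra hv0
  by_cases hvE : v ∈ E
  · exact absurd hv (ne_of_gt (hEpos v hvE hv0))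
  · set W : Submodule ℝ (Fin (n+3) → ℝ) := E ⊔ (ℝ ∙ v) with hW
    -- W is positive semidefinite and injects into ℝ² via first two coords
    have hmem : ∀ w ∈ W, w 0 = 0 → w 1 = 0 → w = 0 := by
      intro w hw h0 h1
      rcases Submodule.mem_sup.mp hw with ⟨e, he, z, hz, hez⟩
      rcases Submodule.mem_span_singleton.mp hz with ⟨t, rfl⟩
      have hexp : bform n w w = bform n e e := by
        have : w = e + t • v := hez.symm
        rw [this]
        have h1' : bform n e v = 0 := by rw [bform_comm]; exact hperp e he
        have h2' : bform n v e = 0 := hperp e he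
        calc bform n (e + t • v) (e + t • v)
            = Bf n (e + t • v) (e + t • v) := rfl
          _ = bform n e e := by
              simp [map_add, map_smul, smul_eq_mul, mul_add, h1', h2', hv]
      have hle : bform n w w ≤ 0 := bform_nonpos n w h0 h1
      have hge : 0 ≤ bform n e e := by
        by_cases he0 : e = 0
        · simp [he0, bform]
        · exact le_of_lt (hEpos e he he0)
      have : bform n w w = 0 := le_antisymm hle (hexp ▸ hge)
      exact bform_zero_coords n w h0 h1 this
    -- linear map to ℝ²
    let q : (Fin (n+3) → ℝ) →ₗ[ℝ] (Fin 2 → ℝ) :=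
      LinearMap.funLeft ℝ ℝ (Fin.castLE (by omega))
    have hinj : Function.Injective (q.comp W.subtype) := by
      rw [← LinearMap.ker_eq_bot]
      rw [Submodule.eq_bot_iff]
      intro w hwk
      have hq : q (w : Fin (n+3) → ℝ) = 0 := hwk
      have h0 : (w : Fin (n+3) → ℝ) 0 = 0 := by
        have := congrFun hq 0
        simpa [q, LinearMap.funLeft] using this
      have h1 : (w : Fin (n+3) → ℝ) 1 = 0 := by
        have := congrFun hq 1
        simp [q, LinearMap.funLeft] at this
        rwa [show (Fin.castLE (by omega) (1 : Fin 2) : Fin (n+3)) = 1 from Fin.ext (by simp)] at this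
      exact Subtype.ext (hmem w w.2 h0 h1)
    have hWle : Module.finrank ℝ W ≤ 2 := by
      have := LinearMap.finrank_le_finrank_of_injective hinj
      simpa using this
    have hlt : E < W := by
      refine lt_of_le_of_ne le_sup_left ?_
      intro hEW
      exact hvE (hEW ▸ (le_sup_right (a := E) : (ℝ ∙ v) ≤ W)
        (Submodule.mem_span_singleton_self v))
    have := Submodule.finrank_lt_finrank_of_lt hlt
    omega


lemma bform_sub_left (n : ℕ) (x y z : Fin (n+3) → ℝ) :
    bform n (x - y) z = bform n x z - bform n y z := by
  have : Bf n (x - y) z = Bf n x z - Bf n y z := by rw [map_sub]; rfl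
  exact this

lemma bform_sub_right (n : ℕ) (x y z : Fin (n+3) → ℝ) :
    bform n x (y - z) = bform n x y - bform n x z := by
  have : Bf n x (y - z) = Bf n x y - Bf n x z := by rw [map_sub]
  exact this


/-- Let `E` be a positive definite 2-plane of `ℝ^{2,n+1}` and `F` a photon (2-dimensional
totally isotropic subspace).  Then the orthogonal projection `π_E` (characterized by
`π_E(x) ∈ E` and `x - π_E(x) ⊥ E`) restricts to a linear isomorphism `F → E`:
every `x ∈ F` has a unique projection, and every `e ∈ E` is the projection of a unique
`x ∈ F`.  Consequently `F` is the graph of a unique linear map `T : E → E^⊥` which is an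
isometric embedding of `(E, ⟨·,·⟩|_E)` into `(E^⊥, -⟨·,·⟩|_{E^⊥})`. -/
theorem stmt19 (n : ℕ) (E F : Submodule ℝ (Fin (n + 3) → ℝ))
    (hE2 : Module.finrank ℝ E = 2)
    (hEpos : ∀ u ∈ E, u ≠ 0 → 0 < bform n u u)
    (hF2 : Module.finrank ℝ F = 2)
    (hFiso : ∀ u ∈ F, ∀ w ∈ F, bform n u w = 0) :
    (∀ x ∈ F, ∃! e, e ∈ E ∧ ∀ e' ∈ E, bform n (x - e) e' = 0) ∧
    (∀ e ∈ E, ∃! x, x ∈ F ∧ ∀ e' ∈ E, bform n (x - e) e' = 0) ∧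
    (∃! T : E →ₗ[ℝ] (Fin (n + 3) → ℝ),
      (∀ e e' : E, bform n (T e) (T e') =
        -(bform n (e : Fin (n + 3) → ℝ) (e' : Fin (n + 3) → ℝ))) ∧
      (∀ e : E, ∀ e' ∈ E, bform n (T e) e' = 0) ∧
      (F : Set (Fin (n + 3) → ℝ)) =
        {x | ∃ e : E, x = (e : Fin (n + 3) → ℝ) + T e}) := by
  classical
  -- the map x ↦ b(x, ·)|_E into the dual of E
  set ψ : (Fin (n+3) → ℝ) →ₗ[ℝ] Module.Dual ℝ E := (Bf n).compl₂ E.subtype with hψ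
  set Φ : E →ₗ[ℝ] Module.Dual ℝ E := ψ.comp E.subtype with hΦ
  have hψapp : ∀ (x : Fin (n+3) → ℝ) (e : E), ψ x e = bform n x e := fun _ _ => rfl
  have hΦinj : Function.Injective Φ := by
    rw [← LinearMap.ker_eq_bot, Submodule.eq_bot_iff]
    intro a ha
    have h0 : ∀ e' : E, bform n (a : Fin (n+3) → ℝ) (e' : Fin (n+3) → ℝ) = 0 := by
      intro e'
      have : Φ a e' = 0 := by rw [ha]; rfl
      exact this
    by_contra ha0
    have : (a : Fin (n+3) → ℝ) ≠ 0 := fun h => ha0 (Subtype.ext h)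
    exact absurd (h0 a) (ne_of_gt (hEpos a a.2 this))
  have hdim : Module.finrank ℝ E = Module.finrank ℝ (Module.Dual ℝ E) :=
    (Subspace.dual_finrank_eq).symm
  set Φeq := Φ.linearEquivOfInjective hΦinj hdim with hΦeq
  set π : (Fin (n+3) → ℝ) →ₗ[ℝ] E := (Φeq.symm : Module.Dual ℝ E →ₗ[ℝ] E).comp ψ with hπ
  have hΦeqapp : ∀ a : E, Φeq a = Φ a := fun a => Φ.linearEquivOfInjective_apply _ _ a
  have key : ∀ (x : Fin (n+3) → ℝ) (e' : Fin (n+3) → ℝ), e' ∈ E →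
      bform n (x - (π x : Fin (n+3) → ℝ)) e' = 0 := by
    intro x e' he'
    have h1 : Φ (π x) = ψ x := by
      rw [← hΦeqapp]
      show Φeq (Φeq.symm (ψ x)) = ψ x
      exact Φeq.apply_symm_apply _
    have h2 : bform n ((π x : Fin (n+3) → ℝ)) e' = bform n x e' := by
      have := congrFun (congrArg (fun f => f.toFun) h1) ⟨e', he'⟩
      exact this
    calc bform n (x - (π x : Fin (n+3) → ℝ)) e'
        = Bf n (x - (π x : Fin (n+3) → ℝ)) e' := rfl
      _ = bform n x e' - bform n ((π x : Fin (n+3) → ℝ)) e' := by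
          rw [map_sub]; rfl
      _ = 0 := by rw [h2]; ring
  -- uniqueness of the projection of any x
  have uniq_proj : ∀ (x : Fin (n+3) → ℝ) (e₁ e₂ : Fin (n+3) → ℝ),
      e₁ ∈ E → e₂ ∈ E → (∀ e' ∈ E, bform n (x - e₁) e' = 0) →
      (∀ e' ∈ E, bform n (x - e₂) e' = 0) → e₁ = e₂ := by
    intro x e₁ e₂ h1 h2 hp1 hp2
    have hd : e₁ - e₂ ∈ E := sub_mem h1 h2
    have hz : ∀ e' ∈ E, bform n (e₁ - e₂) e' = 0 := by
      intro e' he'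
      have : bform n (e₁ - e₂) e' = bform n (x - e₂) e' - bform n (x - e₁) e' := by
        have : (e₁ - e₂ : Fin (n+3) → ℝ) = (x - e₂) - (x - e₁) := by abel
        rw [this]
        rw [bform_sub_left]
      rw [this, hp1 e' he', hp2 e' he', sub_zero]
    by_contra hne
    have hd0 : e₁ - e₂ ≠ 0 := fun h => hne (sub_eq_zero.mp h)
    exact absurd (hz _ hd) (ne_of_gt (hEpos _ hd hd0))
  -- the restriction of π to F
  set φ : F →ₗ[ℝ] E := π.comp F.subtype with hφ
  have hφinj : Function.Injective φ := by
    rw [← LinearMap.ker_eq_bot, Submodule.eq_bot_iff]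
    intro x hx
    have hπx : π (x : Fin (n+3) → ℝ) = 0 := hx
    have hperp : ∀ e ∈ E, bform n (x : Fin (n+3) → ℝ) e = 0 := by
      intro e he
      have := key (x : Fin (n+3) → ℝ) e he
      rw [hπx] at this
      simpa using this
    have := isotropic_perp_zero n E hE2 hEpos x hperp (hFiso x x.2 x x.2)
    exact Subtype.ext this
  set φeq := φ.linearEquivOfInjective hφinj (hF2.trans hE2.symm) with hφeqdef
  have hφeqapp : ∀ a : F, φeq a = φ a := fun a => φ.linearEquivOfInjective_apply _ _ a
  -- projections of elements of F
  have proj_of_F : ∀ (e : E), π ((φeq.symm e : F) : Fin (n+3) → ℝ) = e := by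
    intro e
    have : φ (φeq.symm e) = e := by rw [← hφeqapp]; exact φeq.apply_symm_apply e
    exact this
  refine ⟨?_, ?_, ?_⟩
  · -- part 1
    intro x _
    refine ⟨(π x : Fin (n+3) → ℝ), ⟨(π x).2, fun e' he' => key x e' he'⟩, ?_⟩
    intro y ⟨hy, hyp⟩
    exact uniq_proj x y (π x) hy (π x).2 hyp (fun e' he' => key x e' he')
  · -- part 2
    intro e he
    refine ⟨((φeq.symm ⟨e, he⟩ : F) : Fin (n+3) → ℝ),
      ⟨(φeq.symm ⟨e, he⟩ : F).2, ?_⟩, ?_⟩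
    · intro e' he'
      have hp := proj_of_F ⟨e, he⟩
      have := key ((φeq.symm ⟨e, he⟩ : F) : Fin (n+3) → ℝ) e' he'
      rw [hp] at this
      exact this
    · intro y ⟨hyF, hyp⟩
      -- both y and x₀ project to e; their difference is in F, isotropic, perp to E
      set x₀ : Fin (n+3) → ℝ := ((φeq.symm ⟨e, he⟩ : F) : Fin (n+3) → ℝ) with hx₀
      have hx₀F : x₀ ∈ F := (φeq.symm ⟨e, he⟩ : F).2
      have hx₀p : ∀ e' ∈ E, bform n (x₀ - e) e' = 0 := by
        intro e' he'
        have hp := proj_of_F ⟨e, he⟩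
        have := key x₀ e' he'
        rw [hp] at this
        exact this
      have hdF : y - x₀ ∈ F := sub_mem hyF hx₀F
      have hdperp : ∀ e' ∈ E, bform n (y - x₀) e' = 0 := by
        intro e' he'
        have : (y - x₀ : Fin (n+3) → ℝ) = (y - e) - (x₀ - e) := by abel
        rw [this]
        rw [bform_sub_left, hyp e' he', hx₀p e' he', sub_zero]
      have := isotropic_perp_zero n E hE2 hEpos (y - x₀) hdperp (hFiso _ hdF _ hdF)
      exact sub_eq_zero.mp this
  · -- part 3
    set T : E →ₗ[ℝ] (Fin (n+3) → ℝ) :=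
      (F.subtype.comp (φeq.symm : E →ₗ[ℝ] F)) - E.subtype with hT
    have hTapp : ∀ e : E, T e = ((φeq.symm e : F) : Fin (n+3) → ℝ) - (e : Fin (n+3) → ℝ) :=
      fun e => rfl
    have hTperp : ∀ e : E, ∀ e' ∈ E, bform n (T e) e' = 0 := by
      intro e e' he'
      rw [hTapp]
      have hp := proj_of_F e
      have := key ((φeq.symm e : F) : Fin (n+3) → ℝ) e' he'
      rw [hp] at this
      exact this
    have hTiso : ∀ e e' : E, bform n (T e) (T e') =
        -(bform n (e : Fin (n+3) → ℝ) (e' : Fin (n+3) → ℝ)) := by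
      intro e e'
      set x : Fin (n+3) → ℝ := ((φeq.symm e : F) : Fin (n+3) → ℝ) with hx
      set x' : Fin (n+3) → ℝ := ((φeq.symm e' : F) : Fin (n+3) → ℝ) with hx'
      have hxF : x ∈ F := (φeq.symm e : F).2
      have hx'F : x' ∈ F := (φeq.symm e' : F).2
      have hxx' : bform n x x' = 0 := hFiso x hxF x' hx'F
      -- b (x - e) e'' = 0 for e'' ∈ E
      have hbe : bform n x (e' : Fin (n+3) → ℝ) = bform n (e : Fin (n+3) → ℝ) e' := by
        have h := hTperp e e' e'.2
        rw [hTapp] at h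
        rw [bform_sub_left] at h
        linarith
      have hbe' : bform n x' (e : Fin (n+3) → ℝ) = bform n (e' : Fin (n+3) → ℝ) e := by
        have h := hTperp e' e e.2
        rw [hTapp] at h
        rw [bform_sub_left] at h
        linarith
      rw [hTapp, hTapp]
      have expand : bform n (x - (e : Fin (n+3) → ℝ)) (x' - (e' : Fin (n+3) → ℝ)) =
          bform n x x' - bform n x e' - bform n (e : Fin (n+3) → ℝ) x'
            + bform n (e : Fin (n+3) → ℝ) e' := by
        rw [bform_sub_left, bform_sub_right, bform_sub_right]; ring
      rw [expand, hxx', hbe]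
      have : bform n (e : Fin (n+3) → ℝ) x' = bform n (e : Fin (n+3) → ℝ) e' := by
        rw [bform_comm, hbe', bform_comm]
      rw [this]; ring
    have hgraph : (F : Set (Fin (n + 3) → ℝ)) =
        {x | ∃ e : E, x = (e : Fin (n + 3) → ℝ) + T e} := by
      ext x
      constructor
      · intro hx
        refine ⟨φ ⟨x, hx⟩, ?_⟩
        have h1 : φeq.symm (φ ⟨x, hx⟩) = ⟨x, hx⟩ := by
          rw [← hφeqapp]; exact φeq.symm_apply_apply _
        rw [hTapp, h1]
        simp
      · rintro ⟨e, rfl⟩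
        rw [hTapp]
        have : (e : Fin (n+3) → ℝ) + (((φeq.symm e : F) : Fin (n+3) → ℝ) - e) =
            ((φeq.symm e : F) : Fin (n+3) → ℝ) := by abel
        rw [this]
        exact (φeq.symm e : F).2
    refine ⟨T, ⟨hTiso, hTperp, hgraph⟩, ?_⟩
    intro T' ⟨_, hT'perp, hT'graph⟩
    refine LinearMap.ext fun e => ?_
    -- e + T' e ∈ F and projects to e; same for e + T e
    have hmem' : (e : Fin (n+3) → ℝ) + T' e ∈ F := by
      rw [← SetLike.mem_coe, hT'graph]
      exact ⟨e, rfl⟩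
    have hmem : (e : Fin (n+3) → ℝ) + T e ∈ F := by
      rw [← SetLike.mem_coe, hgraph]
      exact ⟨e, rfl⟩
    have hp' : ∀ e' ∈ E, bform n (((e : Fin (n+3) → ℝ) + T' e) - e) e' = 0 := by
      intro e' he'
      have : ((e : Fin (n+3) → ℝ) + T' e) - e = T' e := by abel
      rw [this]
      exact hT'perp e e' he'
    have hp : ∀ e' ∈ E, bform n (((e : Fin (n+3) → ℝ) + T e) - e) e' = 0 := by
      intro e' he'
      have : ((e : Fin (n+3) → ℝ) + T e) - e = T e := by abel
      rw [this]
      exact hTperp e e' he'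
    -- uniqueness from the projection uniqueness via isotropic difference
    have hdF : ((e : Fin (n+3) → ℝ) + T' e) - ((e : Fin (n+3) → ℝ) + T e) ∈ F :=
      sub_mem hmem' hmem
    have hdperp : ∀ e' ∈ E, bform n
        (((e : Fin (n+3) → ℝ) + T' e) - ((e : Fin (n+3) → ℝ) + T e)) e' = 0 := by
      intro e' he'
      have hrw : ((e : Fin (n+3) → ℝ) + T' e) - ((e : Fin (n+3) → ℝ) + T e)
          = T' e - T e := by abel
      rw [hrw]
      rw [bform_sub_left, hT'perp e e' he', hTperp e e' he', sub_zero]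
    have hzero := isotropic_perp_zero n E hE2 hEpos _ hdperp (hFiso _ hdF _ hdF)
    have : T' e - T e = 0 := by
      have hrw : ((e : Fin (n+3) → ℝ) + T' e) - ((e : Fin (n+3) → ℝ) + T e)
          = T' e - T e := by abel
      rw [hrw] at hzero
      exact hzero
    exact sub_eq_zero.mp this
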